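/- For 0 < δ < 1/18, the Hausdorff dimension of Bad(δ) is at least log(⌊1/(18δ)⌋) / log(1/(6δ)). -/

import Mathlib

set_option maxHeartbeats 1600000

/-- `Bad(δ)`. -/
def badDelta (δ : ℝ) : Set ℝ :=
  {x | Irrational x ∧ ∃ Q : ℕ, 0 < Q ∧ ∀ q : ℕ, Q ≤ q → ∀ p : ℤ,
    Int.gcd p (q : ℤ) = 1 → δ / (q : ℝ) ^ 2 ≤ |x - (p : ℝ) / (q : ℝ)|}

namespace BadDeltaProof

open Set Filter MeasureTheory Topology

lemma frac_spacing (p p' : ℤ) (q q' : ℕ) (hq : 1 ≤ q) (hq' : 1 ≤ q')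
    (hne : (p:ℝ)/q ≠ (p':ℝ)/q') :
    1/((q:ℝ)*(q':ℝ)) ≤ |(p:ℝ)/q - (p':ℝ)/q'| := by
  have hq0 : (0:ℝ) < q := by exact_mod_cast hq
  have hq'0 : (0:ℝ) < q' := by exact_mod_cast hq'
  have key : (p:ℝ)/q - (p':ℝ)/q' = ((p*q' - p'*q : ℤ) : ℝ) / (q*q') := by
    field_simp; push_cast; ring
  have hnum : (p*q' - p'*q : ℤ) ≠ 0 := by
    intro h
    apply hne
    rw [div_eq_div_iff hq0.ne' hq'0.ne']
    have := sub_eq_zero.mp h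
    exact_mod_cast this
  have h1 : (1:ℝ) ≤ |((p*q' - p'*q : ℤ) : ℝ)| := by
    rw [← Int.cast_abs]
    exact_mod_cast Int.one_le_abs hnum
  rw [key, abs_div, abs_of_pos (by positivity : (0:ℝ) < (q:ℝ)*q')]
  exact div_le_div_of_nonneg_right h1 (by positivity)

lemma exists_dodge (δ r : ℝ) (hδ : 0 < δ) (hr : 0 < r) (c : ℝ) :
    ∃ c' : ℝ, |c' - c| ≤ 2*r/3 ∧ ∀ p : ℤ, ∀ q : ℕ, 3*δ/r < (q:ℝ)^2 → (q:ℝ)^2 ≤ 1/(2*r) →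
      ∀ x : ℝ, |x - c'| ≤ r/3 → δ/(q:ℝ)^2 ≤ |x - (p:ℝ)/q| := by
  by_contra hcon
  push_neg at hcon
  have get : ∀ t : ℝ, |t| ≤ 2*r/3 → ∃ p : ℤ, ∃ q : ℕ, 1 ≤ q ∧ (q:ℝ)^2 ≤ 1/(2*r) ∧
      δ/(q:ℝ)^2 < r/3 ∧ |(p:ℝ)/q - (c+t)| < δ/(q:ℝ)^2 + r/3 := by
    intro t ht
    obtain ⟨p, q, hq1, hq2, x, hx, hlt⟩ := hcon (c+t) (by simpa using ht)
    have hq0 : 1 ≤ q := by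
      by_contra h
      interval_cases q
      · simp only [Nat.cast_zero, zero_pow, ne_eq, OfNat.ofNat_ne_zero,
          not_false_eq_true] at hq1
        nlinarith [div_pos (by linarith : (0:ℝ) < 3*δ) hr]
    have hmlt : δ/(q:ℝ)^2 < r/3 := by
      rw [div_lt_iff₀ (by positivity)]
      rw [div_lt_iff₀ hr] at hq1
      nlinarith
    refine ⟨p, q, hq0, hq2, hmlt, ?_⟩
    calc |(p:ℝ)/q - (c+t)| ≤ |(p:ℝ)/q - x| + |x - (c+t)| := abs_sub_le _ _ _
      _ < δ/(q:ℝ)^2 + r/3 := by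
          rw [abs_sub_comm ((p:ℝ)/q) x]; exact add_lt_add_of_lt_of_le hlt hx
  obtain ⟨p₀, q₀, hq₀, hQ₀, hm₀', hd₀⟩ := get (-(2*r/3))
    (by rw [abs_neg, abs_of_pos (by linarith)])
  obtain ⟨p₁, q₁, hq₁, hQ₁, hm₁', hd₁⟩ := get 0 (by rw [abs_zero]; positivity)
  obtain ⟨p₂, q₂, hq₂, hQ₂, hm₂', hd₂⟩ := get (2*r/3) (by rw [abs_of_pos (by linarith)])
  set y₀ := (p₀:ℝ)/q₀ with hy₀
  set y₁ := (p₁:ℝ)/q₁ with hy₁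
  set y₂ := (p₂:ℝ)/q₂ with hy₂
  rw [abs_lt] at hd₀ hd₁ hd₂
  have hy₀lt : y₀ < c := by linarith [hd₀.2]
  have hy₀gt : c - 4*r/3 < y₀ := by linarith [hd₀.1]
  have hy₁l : c - 2*r/3 < y₁ := by linarith [hd₁.1]
  have hy₁r : y₁ < c + 2*r/3 := by linarith [hd₁.2]
  have hy₂gt : c < y₂ := by linarith [hd₂.1]
  have hy₂lt : y₂ < c + 4*r/3 := by linarith [hd₂.2]
  have spacing : ∀ (p p' : ℤ) (q q' : ℕ), 1 ≤ q → 1 ≤ q' → (q:ℝ)^2 ≤ 1/(2*r) →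
      (q':ℝ)^2 ≤ 1/(2*r) →
      (p:ℝ)/q ≠ (p':ℝ)/q' → 2*r ≤ |(p:ℝ)/q - (p':ℝ)/q'| := by
    intro p p' q q' h1 h1' h2 h2' hne
    have hqr : (0:ℝ) < q := by exact_mod_cast h1
    have hq'r : (0:ℝ) < q' := by exact_mod_cast h1'
    have hprod : (q:ℝ)*(q':ℝ) ≤ 1/(2*r) := by
      nlinarith [sq_nonneg ((q:ℝ) - q'), one_div_pos.mpr (by linarith : (0:ℝ) < 2*r)]
    have hqq : (0:ℝ) < (q:ℝ)*q' := mul_pos hqr hq'r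
    have hcancel : (1/(2*r))*(2*r) = 1 := one_div_mul_cancel (by linarith)
    have key : (2*r)*((q:ℝ)*(q':ℝ)) ≤ 1 := by nlinarith
    have h2r : 2*r ≤ 1/((q:ℝ)*(q':ℝ)) := (le_div_iff₀ hqq).mpr key
    linarith [frac_spacing p p' q q' h1 h1' hne]
  have h01 : y₀ = y₁ := by
    by_contra hne
    have hsp := spacing p₀ p₁ q₀ q₁ hq₀ hq₁ hQ₀ hQ₁ hne
    have habs : |y₀ - y₁| < 2*r := by
      rw [abs_sub_lt_iff]; constructor <;> linarith
    linarith
  have h21 : y₂ = y₁ := by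
    by_contra hne
    have hsp := spacing p₂ p₁ q₂ q₁ hq₂ hq₁ hQ₂ hQ₁ hne
    have habs : |y₂ - y₁| < 2*r := by
      rw [abs_sub_lt_iff]; constructor <;> linarith
    linarith
  rw [← h21] at h01
  linarith [h01 ▸ hy₀lt]


noncomputable def rad (δ : ℝ) (n : ℕ) : ℝ := δ * (6*δ)^n

noncomputable def dodge (δ r c : ℝ) : ℝ :=
  if h : 0 < δ ∧ 0 < r then Classical.choose (exists_dodge δ r h.1 h.2 c) else c

lemma dodge_spec {δ r : ℝ} (hδ : 0 < δ) (hr : 0 < r) (c : ℝ) :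
    |dodge δ r c - c| ≤ 2*r/3 ∧ ∀ p : ℤ, ∀ q : ℕ, 3*δ/r < (q:ℝ)^2 → (q:ℝ)^2 ≤ 1/(2*r) →
      ∀ x : ℝ, |x - dodge δ r c| ≤ r/3 → δ/(q:ℝ)^2 ≤ |x - (p:ℝ)/q| := by
  rw [dodge, dif_pos ⟨hδ, hr⟩]
  exact Classical.choose_spec (exists_dodge δ r hδ hr c)

noncomputable def cen (δ : ℝ) (N : ℕ) : (n : ℕ) → (Fin n → Fin N) → ℝ
  | 0, _ => 1/2
  | (n+1), a => dodge δ (rad δ n) (cen δ N n (fun i => a i.castSucc)) - (rad δ n)/3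
      + (2*(a (Fin.last n) : ℕ) + 1) * rad δ (n+1)

lemma cen_zero (δ : ℝ) (N : ℕ) (a : Fin 0 → Fin N) : cen δ N 0 a = 1/2 := rfl

section Main
variable {δ : ℝ} {N : ℕ} (h0 : 0 < δ) (hNle : (N:ℝ) ≤ 1/(18*δ)) (hN1 : 1 ≤ N)

include h0

lemma rad_pos (n : ℕ) : 0 < rad δ n := by
  unfold rad; positivity

lemma rad_succ (n : ℕ) : rad δ (n+1) = 6*δ*rad δ n := by
  unfold rad; ring

include hNle

-- child interval is inside the dodge ball
lemma child_sub_dodge (n : ℕ) (a : Fin (n+1) → Fin N) :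
    Icc (cen δ N (n+1) a - rad δ (n+1)) (cen δ N (n+1) a + rad δ (n+1)) ⊆
      Icc (dodge δ (rad δ n) (cen δ N n (fun i => a i.castSucc)) - rad δ n/3)
          (dodge δ (rad δ n) (cen δ N n (fun i => a i.castSucc)) + rad δ n/3) := by
  set d := dodge δ (rad δ n) (cen δ N n (fun i => a i.castSucc))
  have hr := rad_pos h0 n
  have hr' := rad_pos h0 (n+1)
  have hj : ((a (Fin.last n) : ℕ) : ℝ) ≤ (N:ℝ) - 1 := by
    have := (a (Fin.last n)).isLt
    have : ((a (Fin.last n) : ℕ) : ℝ) + 1 ≤ (N:ℝ) := by exact_mod_cast this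
    linarith
  have hNr : (N:ℝ)*rad δ (n+1) ≤ rad δ n/3 := by
    rw [rad_succ h0]
    have h18 : 18*δ*(N:ℝ) ≤ 1 := by
      have h18δ : 0 < 18*δ := by linarith
      have := (le_div_iff₀ h18δ).mp hNle
      linarith
    nlinarith
  have key : cen δ N (n+1) a = d - rad δ n/3 + (2*(a (Fin.last n) : ℕ) + 1) * rad δ (n+1) := by
    simp [cen]; rfl
  rw [key]
  apply Icc_subset_Icc <;> nlinarith
  
omit hNle in
lemma dodge_sub_parent (n : ℕ) (c : ℝ) :
    Icc (dodge δ (rad δ n) c - rad δ n/3) (dodge δ (rad δ n) c + rad δ n/3) ⊆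
      Icc (c - rad δ n) (c + rad δ n) := by
  have hr := rad_pos h0 n
  have h1 := (dodge_spec h0 hr c).1
  rw [abs_le] at h1
  apply Icc_subset_Icc <;> [linarith [h1.1]; linarith [h1.2]]

lemma cen_child_dist (n : ℕ) (a : Fin (n+1) → Fin N) :
    |cen δ N (n+1) a - cen δ N n (fun i => a i.castSucc)| ≤ rad δ n - rad δ (n+1) := by
  have hsub := (child_sub_dodge h0 hNle n a).trans (dodge_sub_parent h0 n _)
  have hr' := rad_pos h0 (n+1)
  have hl := hsub (left_mem_Icc.mpr (by linarith))
  have hr2 := hsub (right_mem_Icc.mpr (by linarith))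
  rw [abs_le]
  constructor <;> [linarith [hl.1]; linarith [hr2.2]]

include hN1 in
-- separation of distinct nodes at the same level
lemma cen_sep : ∀ (n : ℕ) (a b : Fin n → Fin N), a ≠ b →
    2 * rad δ n ≤ |cen δ N n a - cen δ N n b| := by
  intro n
  induction n with
  | zero => intro a b hab; exact absurd (funext fun i => i.elim0) hab
  | succ n ih =>
    intro a b hab
    by_cases hinit : (fun i : Fin n => a i.castSucc) = (fun i : Fin n => b i.castSucc)
    · -- same parent, different last digit
      have hlast : a (Fin.last n) ≠ b (Fin.last n) := by
        intro h
        apply hab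
        funext i
        rcases Fin.eq_castSucc_or_eq_last i with ⟨j, rfl⟩ | rfl
        · exact congrFun hinit j
        · exact h
      have hr' := rad_pos h0 (n+1)
      have key : cen δ N (n+1) a - cen δ N (n+1) b
          = ((2*(a (Fin.last n) : ℕ) + 1) - (2*(b (Fin.last n) : ℕ) + 1)) * rad δ (n+1) := by
        simp only [cen, hinit]
        ring
      have hd : (1:ℝ) ≤ |((a (Fin.last n) : ℕ) : ℝ) - ((b (Fin.last n) : ℕ) : ℝ)| := by
        have hne : (a (Fin.last n) : ℕ) ≠ (b (Fin.last n) : ℕ) := by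
          simpa [Fin.val_eq_val] using hlast
        have h1 : (1:ℤ) ≤ |((a (Fin.last n) : ℕ) : ℤ) - ((b (Fin.last n) : ℕ) : ℤ)| :=
          Int.one_le_abs (sub_ne_zero.mpr (by exact_mod_cast hne))
        have h2 : ((1:ℤ):ℝ) ≤ ((|((a (Fin.last n) : ℕ):ℤ) - ((b (Fin.last n) : ℕ):ℤ)| : ℤ) : ℝ) := by
          exact_mod_cast h1
        rw [Int.cast_abs] at h2
        push_cast at h2
        simpa using h2
      rw [key, abs_mul, abs_of_pos hr']
      have : ((2*(a (Fin.last n) : ℕ) + 1 : ℝ) - (2*(b (Fin.last n) : ℕ) + 1))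
          = 2*(((a (Fin.last n) : ℕ) : ℝ) - ((b (Fin.last n) : ℕ) : ℝ)) := by push_cast; ring
      rw [this, abs_mul, abs_two]
      nlinarith
    · -- different parents
      have hpar := ih (fun i => a i.castSucc) (fun i => b i.castSucc) hinit
      have hda := cen_child_dist h0 hNle n a
      have hdb := cen_child_dist h0 hNle n b
      rw [abs_le] at hda hdb
      rw [rad_succ h0] at *
      have hr := rad_pos h0 n
      have h6 : 6*δ*rad δ n < rad δ n := by
        have : 18*δ*(N:ℝ) ≤ 1 := by
          have h18δ : 0 < 18*δ := by linarith
          have := (le_div_iff₀ h18δ).mp hNle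
          linarith
        have hN1' : (1:ℝ) ≤ N := by exact_mod_cast hN1
        nlinarith
      rcases le_or_gt (cen δ N n (fun i => a i.castSucc)) (cen δ N n (fun i => b i.castSucc)) with hc | hc
      · have : 2*rad δ n ≤ cen δ N n (fun i => b i.castSucc) - cen δ N n (fun i => a i.castSucc) := by
          rw [abs_sub_comm] at hpar
          rwa [abs_of_nonneg (by linarith)] at hpar
        rw [abs_sub_comm, abs_of_nonneg (by nlinarith [hda.2, hdb.1, mul_pos h0 hr])]
        linarith [hda.2, hdb.1]
      · have : 2*rad δ n ≤ cen δ N n (fun i => a i.castSucc) - cen δ N n (fun i => b i.castSucc) := by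
          rwa [abs_of_nonneg (by linarith)] at hpar
        rw [abs_of_nonneg (by nlinarith [hda.2, hdb.1, mul_pos h0 hr])]
        linarith [hda.2, hdb.1]

end Main


noncomputable def node (δ : ℝ) (N : ℕ) (n : ℕ) (a : Fin n → Fin N) : Set ℝ :=
  Icc (cen δ N n a - rad δ n) (cen δ N n a + rad δ n)

noncomputable def kantorSet (δ : ℝ) (N : ℕ) : Set ℝ :=
  ⋂ n : ℕ, ⋃ a : Fin n → Fin N, node δ N n a

lemma node_mono {δ : ℝ} {N : ℕ} (h0 : 0 < δ) (hNle : (N:ℝ) ≤ 1/(18*δ)) (n : ℕ)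
    (a : Fin (n+1) → Fin N) : node δ N (n+1) a ⊆ node δ N n (fun i => a i.castSucc) := by
  simp only [node]
  exact subset_trans (child_sub_dodge h0 hNle n a) (dodge_sub_parent h0 n _)

section Main2
variable {δ : ℝ} {N : ℕ} (h0 : 0 < δ) (h36 : δ ≤ 1/36) (hNle : (N:ℝ) ≤ 1/(18*δ)) (hN1 : 1 ≤ N)

include h0 h36 in
lemma exists_range_level (q : ℕ) (hq : 2 ≤ q) :
    ∃ n : ℕ, 3*δ/rad δ n < (q:ℝ)^2 ∧ (q:ℝ)^2 ≤ 1/(2*rad δ n) := by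
  have hq4 : (4:ℝ) ≤ (q:ℝ)^2 := by
    have : (2:ℝ) ≤ (q:ℝ) := by exact_mod_cast hq
    nlinarith
  have hval : ∀ n, 3*δ/rad δ n = 3/(6*δ)^n := by
    intro n
    rw [rad]
    rw [div_eq_div_iff (by positivity) (by positivity)]
    ring
  have h61 : 6*δ < 1 := by linarith
  have hex : ∃ n, ¬ 3*δ/rad δ n < (q:ℝ)^2 := by
    obtain ⟨n, hn⟩ := exists_pow_lt_of_lt_one
      (show (0:ℝ) < 3/(q:ℝ)^2 by positivity) h61
    refine ⟨n, ?_⟩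
    rw [hval n, not_lt, le_div_iff₀ (by positivity)]
    rw [lt_div_iff₀ (by positivity)] at hn
    nlinarith
  classical
  have h0m : 0 < Nat.find hex := by
    rcases Nat.eq_zero_or_pos (Nat.find hex) with h00 | h
    · exfalso
      have hsp := Nat.find_spec hex
      rw [h00, hval 0, pow_zero] at hsp
      apply hsp
      norm_num
      linarith
    · exact h
  set m := Nat.find hex with hm
  refine ⟨m - 1, ?_, ?_⟩
  · have := Nat.find_min hex (m := m - 1) (by omega)
    rwa [not_not] at this
  · have hspec := Nat.find_spec hex
    rw [not_lt] at hspec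
    have hkey : 3*δ/rad δ m = 1/(2*rad δ (m-1)) := by
      have hmm : m - 1 + 1 = m := by omega
      have hr : rad δ (m-1) ≠ 0 := (rad_pos h0 (m-1)).ne'
      rw [← hmm, rad_succ h0]
      rw [div_eq_div_iff (by positivity) (by positivity)]
      ring_nf
      rw [show (1 + (m - 1) - 1 : ℕ) = m - 1 from by omega]
    rw [hkey] at hspec
    exact hspec

end Main2

section Main3
variable {δ : ℝ} {N : ℕ} (h0 : 0 < δ) (h36 : δ ≤ 1/36) (hNle : (N:ℝ) ≤ 1/(18*δ)) (hN1 : 1 ≤ N)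

include h0 h36 hNle in
lemma kantor_avoid (x : ℝ) (hx : x ∈ kantorSet δ N) (q : ℕ) (hq : 2 ≤ q) (p : ℤ) :
    δ/(q:ℝ)^2 ≤ |x - (p:ℝ)/q| := by
  obtain ⟨n, hn1, hn2⟩ := exists_range_level h0 h36 q hq
  have hxn : x ∈ ⋃ a : Fin (n+1) → Fin N, node δ N (n+1) a := mem_iInter.mp hx (n+1)
  obtain ⟨a, ha⟩ := mem_iUnion.mp hxn
  rw [node] at ha
  have hdodge := child_sub_dodge h0 hNle n a ha
  have habs : |x - dodge δ (rad δ n) (cen δ N n (fun i => a i.castSucc))| ≤ rad δ n/3 := by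
    rw [abs_le]
    constructor <;> [linarith [hdodge.1]; linarith [hdodge.2]]
  exact (dodge_spec h0 (rad_pos h0 n) _).2 p q hn1 hn2 x habs

include h0 in
lemma kantor_node0 (x : ℝ) (hx : x ∈ kantorSet δ N) : x ∈ Icc (1/2 - δ) (1/2 + δ) := by
  have hxn : x ∈ ⋃ a : Fin 0 → Fin N, node δ N 0 a := mem_iInter.mp hx 0
  obtain ⟨a, ha⟩ := mem_iUnion.mp hxn
  rw [node, cen_zero] at ha
  have : rad δ 0 = δ := by rw [rad]; ring
  rwa [this] at ha

include h0 h36 hNle in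
lemma kantor_subset_bad : kantorSet δ N ⊆ badDelta δ := by
  intro x hx
  have hnode0 := kantor_node0 h0 x hx
  constructor
  · rintro ⟨ξ, rfl⟩
    rcases le_or_gt 2 ξ.den with hden | hden
    · have hav := kantor_avoid h0 h36 hNle _ hx ξ.den hden ξ.num
      rw [Rat.cast_def, sub_self, abs_zero] at hav
      have : (0:ℝ) < δ/(ξ.den:ℝ)^2 := by
        have : (0:ℝ) < (ξ.den:ℝ) := by exact_mod_cast ξ.pos
        positivity
      linarith
    · have hpos := ξ.pos
      have hden1 : ξ.den = 1 := by omega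
      have hxint : ((ξ:ℝ)) = (ξ.num:ℝ) := by
        rw [Rat.cast_def, hden1]
        simp
      rw [hxint] at hnode0
      rcases le_or_gt ξ.num 0 with hn | hn
      · have : (ξ.num:ℝ) ≤ 0 := by exact_mod_cast hn
        have := hnode0.1
        linarith
      · have h1 : (1:ℤ) ≤ ξ.num := hn
        have : (1:ℝ) ≤ (ξ.num:ℝ) := by exact_mod_cast h1
        have := hnode0.2
        linarith
  · exact ⟨2, by norm_num, fun q hq p _ => kantor_avoid h0 h36 hNle _ hx q hq p⟩

end Main3


noncomputable def dig (N : ℕ) [NeZero N] (k : ℕ) (y : ℝ) : Fin N :=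
  ⟨(⌊y * (N:ℝ)^(k+1)⌋ % (N:ℤ)).toNat, by
    have hN : 0 < (N:ℤ) := by exact_mod_cast Nat.pos_of_ne_zero (NeZero.ne N)
    have h1 := Int.emod_nonneg ⌊y * (N:ℝ)^(k+1)⌋ hN.ne'
    have h2 := Int.emod_lt_of_pos ⌊y * (N:ℝ)^(k+1)⌋ hN
    omega⟩

noncomputable def pre (N : ℕ) [NeZero N] (n : ℕ) (y : ℝ) : Fin n → Fin N :=
  fun k => dig N k.val y

lemma floor_base_expansion (N : ℕ) [NeZero N] (hN : 1 ≤ N) (y : ℝ) (hy : y ∈ Ico (0:ℝ) 1) :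
    ∀ n : ℕ, (⌊y * (N:ℝ)^n⌋ : ℝ) =
      (N:ℝ)^n * ∑ k : Fin n, ((dig N k.val y : ℕ) : ℝ) * ((N:ℝ)⁻¹)^((k:ℕ)+1) := by
  intro n
  induction n with
  | zero =>
    simp [Int.floor_eq_zero_iff.mpr (by simpa using hy)]
  | succ n ih =>
    have hNR : (0:ℝ) < (N:ℝ) := by exact_mod_cast Nat.pos_of_ne_zero (NeZero.ne N)
    have hdiv : ⌊y * (N:ℝ)^(n+1)⌋ / (N:ℤ) = ⌊y * (N:ℝ)^n⌋ := by
      have hNZ : (0:ℤ) < (N:ℤ) := by exact_mod_cast Nat.pos_of_ne_zero (NeZero.ne N)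
      set M := ⌊y * (N:ℝ)^(n+1)⌋ with hM
      have h1 : (M:ℝ) ≤ y * (N:ℝ)^(n+1) := Int.floor_le _
      have h2 : y * (N:ℝ)^(n+1) < (M:ℝ) + 1 := Int.lt_floor_add_one _
      have hqr := Int.mul_ediv_add_emod M (N:ℤ)
      have hr0 : 0 ≤ M % (N:ℤ) := Int.emod_nonneg _ hNZ.ne'
      have hr1 : M % (N:ℤ) < (N:ℤ) := Int.emod_lt_of_pos _ hNZ
      have hcast : ((N:ℤ):ℝ) * ((M / (N:ℤ) : ℤ):ℝ) + ((M % (N:ℤ) : ℤ):ℝ) = (M:ℝ) := by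
        exact_mod_cast congrArg (fun z : ℤ => (z : ℝ)) hqr
      have hrR0 : (0:ℝ) ≤ ((M % (N:ℤ) : ℤ):ℝ) := by exact_mod_cast hr0
      have hrR1 : ((M % (N:ℤ) : ℤ):ℝ) + 1 ≤ ((N:ℤ):ℝ) := by exact_mod_cast hr1
      have hp : y * (N:ℝ)^(n+1) = (y * (N:ℝ)^n) * (N:ℝ) := by rw [pow_succ]; ring
      push_cast at hcast hrR1 hrR0
      symm
      rw [Int.floor_eq_iff]
      constructor
      · nlinarith [hNR]
      · push_cast
        nlinarith [hNR]
    have hsplit : (⌊y * (N:ℝ)^(n+1)⌋ : ℤ) =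
        (N:ℤ) * ⌊y * (N:ℝ)^n⌋ + ((dig N n y : ℕ) : ℤ) := by
      have := Int.mul_ediv_add_emod ⌊y * (N:ℝ)^(n+1)⌋ (N:ℤ)
      have hdig : ((dig N n y : ℕ) : ℤ) = ⌊y * (N:ℝ)^(n+1)⌋ % (N:ℤ) := by
        simp only [dig]
        rw [Int.toNat_of_nonneg (Int.emod_nonneg _ (by exact_mod_cast (Nat.pos_of_ne_zero (NeZero.ne N)).ne'))]
      rw [hdig, ← hdiv]
      linarith [this]
    have hcast : ((⌊y * (N:ℝ)^(n+1)⌋ : ℤ) : ℝ) =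
        (N:ℝ) * ((⌊y * (N:ℝ)^n⌋ : ℤ) : ℝ) + ((dig N n y : ℕ) : ℝ) := by
      exact_mod_cast congrArg (fun z : ℤ => (z : ℝ)) hsplit
    rw [hcast, ih, Fin.sum_univ_castSucc]
    simp only [Fin.coe_castSucc, Fin.val_last]
    have hNne : (N:ℝ) ≠ 0 := hNR.ne'
    have key : (N:ℝ)^(n+1) * ((N:ℝ)⁻¹)^(n+1) = 1 := by
      rw [← mul_pow, mul_inv_cancel₀ hNne, one_pow]
    linear_combination (-((dig N n y : ℕ) : ℝ)) * key

noncomputable def vA (N : ℕ) (n : ℕ) (a : Fin n → Fin N) : ℝ :=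
  ∑ k : Fin n, ((a k : ℕ) : ℝ) * ((N:ℝ)⁻¹)^((k:ℕ)+1)

lemma pre_mem_interval (N : ℕ) [NeZero N] (n : ℕ) (a : Fin n → Fin N)
    (y : ℝ) (hy : y ∈ Ico (0:ℝ) 1) (hpre : pre N n y = a) :
    y ∈ Ico (vA N n a) (vA N n a + ((N:ℝ)⁻¹)^n) := by
  have hN : 1 ≤ N := Nat.pos_of_ne_zero (NeZero.ne N)
  have hNR : (0:ℝ) < (N:ℝ) := by exact_mod_cast hN
  have hfl := floor_base_expansion N hN y hy n
  have hsum : vA N n a = ∑ k : Fin n, ((dig N k.val y : ℕ) : ℝ) * ((N:ℝ)⁻¹)^((k:ℕ)+1) := by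
    unfold vA
    refine Finset.sum_congr rfl fun k _ => ?_
    rw [← hpre]
    rfl
  have h1 : ((⌊y * (N:ℝ)^n⌋ : ℤ):ℝ) ≤ y * (N:ℝ)^n := Int.floor_le _
  have h2 : y * (N:ℝ)^n < ((⌊y * (N:ℝ)^n⌋ : ℤ):ℝ) + 1 := Int.lt_floor_add_one _
  rw [hfl] at h1 h2
  rw [hsum]
  have hpow : (0:ℝ) < (N:ℝ)^n := by positivity
  have hinv : ((N:ℝ)⁻¹)^n = ((N:ℝ)^n)⁻¹ := by rw [inv_pow]
  constructor
  · rw [← mul_le_mul_iff_right₀ hpow]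
    linarith
  · rw [hinv]
    have hc : (N:ℝ)^n * ((N:ℝ)^n)⁻¹ = 1 := mul_inv_cancel₀ hpow.ne'
    nlinarith

lemma volume_pre_fiber (N : ℕ) [NeZero N] (n : ℕ) (a : Fin n → Fin N) :
    MeasureTheory.volume {y ∈ Ico (0:ℝ) 1 | pre N n y = a} ≤
      ENNReal.ofReal (((N:ℝ)⁻¹)^n) := by
  have hsub : {y ∈ Ico (0:ℝ) 1 | pre N n y = a} ⊆
      Ico (vA N n a) (vA N n a + ((N:ℝ)⁻¹)^n) := fun y hy =>
    pre_mem_interval N n a y hy.1 hy.2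
  calc MeasureTheory.volume {y ∈ Ico (0:ℝ) 1 | pre N n y = a}
      ≤ MeasureTheory.volume (Ico (vA N n a) (vA N n a + ((N:ℝ)⁻¹)^n)) :=
        MeasureTheory.measure_mono hsub
    _ = ENNReal.ofReal (((N:ℝ)⁻¹)^n) := by rw [Real.volume_Ico]; ring_nf


noncomputable def phiFin (δ : ℝ) (N : ℕ) [NeZero N] (n : ℕ) (y : ℝ) : ℝ :=
  cen δ N n (pre N n y)

noncomputable def phi (δ : ℝ) (N : ℕ) [NeZero N] (y : ℝ) : ℝ :=
  1/2 + ∑' n, (phiFin δ N (n+1) y - phiFin δ N n y)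

section P
variable {δ : ℝ} {N : ℕ} [NeZero N] (h0 : 0 < δ) (hNle : (N:ℝ) ≤ 1/(18*δ)) (hN1 : 1 ≤ N)

lemma pre_castSucc (n : ℕ) (y : ℝ) :
    (fun i : Fin n => pre N (n+1) y i.castSucc) = pre N n y := rfl

include h0 hNle hN1

lemma six_delta_lt_one : 6*δ < 1 := by
  have h18δ : 0 < 18*δ := by linarith
  have := (le_div_iff₀ h18δ).mp hNle
  have hN1' : (1:ℝ) ≤ N := by exact_mod_cast hN1
  nlinarith

lemma phiFin_dist (n : ℕ) (y : ℝ) :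
    |phiFin δ N (n+1) y - phiFin δ N n y| ≤ rad δ n := by
  have := cen_child_dist h0 hNle n (pre N (n+1) y)
  rw [pre_castSucc] at this
  have := this
  have hr' := rad_pos h0 (n+1)
  calc |phiFin δ N (n+1) y - phiFin δ N n y| ≤ rad δ n - rad δ (n+1) := this
    _ ≤ rad δ n := by linarith

lemma phi_tendsto (y : ℝ) :
    Tendsto (fun n => phiFin δ N n y) atTop (𝓝 (phi δ N y)) := by
  have hsum : Summable (fun n => phiFin δ N (n+1) y - phiFin δ N n y) := by
    apply Summable.of_norm_bounded (g := fun n => δ * (6*δ)^n)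
    · exact Summable.mul_left δ (summable_geometric_of_lt_one (by linarith)
        (six_delta_lt_one h0 hNle hN1))
    · intro n
      rw [Real.norm_eq_abs]
      calc |phiFin δ N (n+1) y - phiFin δ N n y| ≤ rad δ n := phiFin_dist h0 hNle hN1 n y
        _ = δ * (6*δ)^n := rfl
  have htel : ∀ n, phiFin δ N n y = 1/2 + ∑ k ∈ Finset.range n,
      (phiFin δ N (k+1) y - phiFin δ N k y) := by
    intro n
    rw [Finset.sum_range_sub (fun k => phiFin δ N k y)]
    have : phiFin δ N 0 y = 1/2 := cen_zero δ N _
    linarith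
  have := hsum.hasSum.tendsto_sum_nat
  have h2 : Tendsto (fun n => 1/2 + ∑ k ∈ Finset.range n,
      (phiFin δ N (k+1) y - phiFin δ N k y)) atTop
      (𝓝 (1/2 + ∑' n, (phiFin δ N (n+1) y - phiFin δ N n y))) :=
    (tendsto_const_nhds.add this)
  rw [phi]
  convert h2 using 1
  funext n
  exact htel n

lemma phi_mem_node (y : ℝ) (n : ℕ) : phi δ N y ∈ node δ N n (pre N n y) := by
  have hchain : ∀ m, n ≤ m → node δ N m (pre N m y) ⊆ node δ N n (pre N n y) := by
    intro m hm
    induction m, hm using Nat.le_induction with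
    | base => exact subset_rfl
    | succ m hm ih =>
      refine subset_trans ?_ ih
      have := node_mono h0 hNle m (pre N (m+1) y)
      rwa [pre_castSucc] at this
  have hmem : ∀ m, n ≤ m → phiFin δ N m y ∈ node δ N n (pre N n y) := by
    intro m hm
    apply hchain m hm
    rw [node]
    have := rad_pos h0 m
    constructor <;> [simp [phiFin]; simp [phiFin]] <;> linarith
  exact IsClosed.mem_of_tendsto isClosed_Icc (phi_tendsto h0 hNle hN1 y)
    (eventually_atTop.mpr ⟨n, hmem⟩)

lemma phi_measurable : Measurable (phi δ N) := by
  have hfin : ∀ n, Measurable (phiFin δ N n) := by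
    intro n
    have hpre : Measurable (pre N n) := by
      apply measurable_pi_lambda
      intro k
      have h1 : Measurable (fun y : ℝ => ⌊y * (N:ℝ)^((k:ℕ)+1)⌋) :=
        Int.measurable_floor.comp (measurable_id.mul_const _)
      exact (measurable_from_top (f := fun z : ℤ =>
        (⟨(z % (N:ℤ)).toNat, by
          have hN : 0 < (N:ℤ) := by exact_mod_cast Nat.pos_of_ne_zero (NeZero.ne N)
          have := Int.emod_nonneg z hN.ne'
          have := Int.emod_lt_of_pos z hN
          omega⟩ : Fin N))).comp h1
    exact (measurable_of_countable (cen δ N n)).comp hpre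
  exact measurable_of_tendsto_metrizable hfin
    (tendsto_pi_nhds.mpr (fun y => phi_tendsto h0 hNle hN1 y))

end P


-- counting lemma
lemma card_sep {ι : Type*} (T : Finset ι) (f : ι → ℝ) (s L u : ℝ) (hs : 0 < s) (hL : 0 ≤ L)
    (hsep : ∀ i ∈ T, ∀ j ∈ T, i ≠ j → s ≤ |f i - f j|)
    (hin : ∀ i ∈ T, |f i - u| ≤ L) :
    (T.card : ℝ) * s ≤ 2*L + s := by
  have hdisj : ∀ i ∈ T, ∀ j ∈ T, i ≠ j →
      Disjoint (Ioo (f i - s/2) (f i + s/2)) (Ioo (f j - s/2) (f j + s/2)) := by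
    intro i hi j hj hij
    have := hsep i hi j hj hij
    rw [Set.disjoint_left]
    intro x hx1 hx2
    simp only [mem_Ioo] at hx1 hx2
    rcases le_or_gt (f i) (f j) with h | h
    · rw [abs_sub_comm, abs_of_nonneg (by linarith)] at this
      linarith [hx1.1, hx1.2, hx2.1, hx2.2]
    · rw [abs_of_nonneg (by linarith)] at this
      linarith [hx1.1, hx1.2, hx2.1, hx2.2]
  have hunion : (⋃ i ∈ T, Ioo (f i - s/2) (f i + s/2)) ⊆ Ioo (u - L - s/2) (u + L + s/2) := by
    intro x hx
    simp only [mem_iUnion] at hx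
    obtain ⟨i, hi, hx⟩ := hx
    have := abs_le.mp (hin i hi)
    simp only [mem_Ioo] at hx ⊢
    constructor <;> [linarith [hx.1, this.1]; linarith [hx.2, this.2]]
  have hvol := measure_biUnion_finset (μ := volume)
    (by
      intro i hi j hj hij
      exact hdisj i hi j hj hij)
    (fun i _ => measurableSet_Ioo (a := f i - s/2) (b := f i + s/2))
  have hle : ∑ i ∈ T, volume (Ioo (f i - s/2) (f i + s/2)) ≤
      ENNReal.ofReal (2*L + s) := by
    rw [← hvol]
    calc volume (⋃ i ∈ T, Ioo (f i - s/2) (f i + s/2))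
        ≤ volume (Ioo (u - L - s/2) (u + L + s/2)) := measure_mono hunion
      _ = ENNReal.ofReal (2*L + s) := by rw [Real.volume_Ioo]; congr 1; ring
  have hsum : ∑ i ∈ T, volume (Ioo (f i - s/2) (f i + s/2)) =
      (T.card : ENNReal) * ENNReal.ofReal s := by
    rw [Finset.sum_congr rfl (fun i (_ : i ∈ T) => by
      rw [Real.volume_Ioo, show f i + s/2 - (f i - s/2) = s from by ring])]
    rw [Finset.sum_const, nsmul_eq_mul]
  rw [hsum] at hle
  have : ENNReal.ofReal ((T.card : ℝ) * s) ≤ ENNReal.ofReal (2*L + s) := by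
    rw [ENNReal.ofReal_mul (by positivity)]
    simpa [ENNReal.ofReal_natCast] using hle
  exact (ENNReal.ofReal_le_ofReal_iff (by linarith)).mp this

noncomputable def muC (δ : ℝ) (N : ℕ) [NeZero N] : Measure ℝ :=
  Measure.map (phi δ N) (volume.restrict (Ico (0:ℝ) 1))

section M
variable {δ : ℝ} {N : ℕ} [NeZero N] (h0 : 0 < δ) (hNle : (N:ℝ) ≤ 1/(18*δ)) (hN1 : 1 ≤ N)

include h0 hNle hN1

lemma mass_bound (U : Set ℝ) (u d : ℝ) (hd : 0 ≤ d) (hU : U ⊆ Icc (u-d) (u+d)) (n : ℕ) :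
    muC δ N U ≤ ENNReal.ofReal (d/rad δ n + 4) * ENNReal.ofReal (((N:ℝ)⁻¹)^n) := by
  classical
  have hr := rad_pos h0 n
  set T1 : Finset (Fin n → Fin N) :=
    Finset.univ.filter (fun a => |cen δ N n a - u| ≤ d + rad δ n) with hT1
  set T2 : Finset (Fin n → Fin N) :=
    Finset.univ.filter (fun a => |cen δ N n a - u| ≤ d + 3*rad δ n) with hT2
  set V : Set ℝ := (⋃ a ∈ T1, node δ N n a) ∪ (⋃ a : Fin n → Fin N, node δ N n a)ᶜ with hV
  have hmeasnode : ∀ a : Fin n → Fin N, MeasurableSet (node δ N n a) := fun a => measurableSet_Icc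
  have hVmeas : MeasurableSet V := by
    apply MeasurableSet.union
    · exact T1.measurableSet_biUnion (fun a _ => hmeasnode a)
    · exact (MeasurableSet.iUnion (fun a => hmeasnode a)).compl
  have hUV : U ⊆ V := by
    intro x hx
    by_cases hex : ∃ a : Fin n → Fin N, x ∈ node δ N n a
    · obtain ⟨a, ha⟩ := hex
      left
      refine mem_biUnion (Finset.mem_coe.mpr ?_) ha
      rw [hT1, Finset.mem_filter]
      refine ⟨Finset.mem_univ _, ?_⟩
      have h1 : |cen δ N n a - x| ≤ rad δ n := by
        rw [node, mem_Icc] at ha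
        rw [abs_le]
        constructor <;> [linarith [ha.2]; linarith [ha.1]]
      have h2 : |x - u| ≤ d := by
        have := hU hx
        rw [mem_Icc] at this
        rw [abs_le]
        constructor <;> [linarith [this.1]; linarith [this.2]]
      calc |cen δ N n a - u| ≤ |cen δ N n a - x| + |x - u| := abs_sub_le _ _ _
        _ ≤ d + rad δ n := by linarith
    · right
      rw [mem_compl_iff]
      push_neg at hex
      simpa using hex
  have hmap : ∀ (A : Set ℝ), MeasurableSet A → muC δ N A =
      volume ((phi δ N ⁻¹' A) ∩ Ico (0:ℝ) 1) := by
    intro A hA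
    rw [muC, Measure.map_apply (phi_measurable h0 hNle hN1) hA,
      Measure.restrict_apply ((phi_measurable h0 hNle hN1) hA)]
  have hcompl : muC δ N ((⋃ a : Fin n → Fin N, node δ N n a)ᶜ) = 0 := by
    rw [hmap _ ((MeasurableSet.iUnion (fun a => hmeasnode a)).compl)]
    have : (phi δ N ⁻¹' (⋃ a : Fin n → Fin N, node δ N n a)ᶜ) = ∅ := by
      ext y
      simp only [mem_preimage, mem_compl_iff, mem_iUnion, mem_empty_iff_false, iff_false,
        not_not]
      exact ⟨pre N n y, phi_mem_node h0 hNle hN1 y n⟩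
    rw [this, empty_inter]
    exact measure_empty
  have hmain : muC δ N (⋃ a ∈ T1, node δ N n a) ≤
      (T2.card : ENNReal) * ENNReal.ofReal (((N:ℝ)⁻¹)^n) := by
    rw [hmap _ (T1.measurableSet_biUnion (fun a _ => hmeasnode a))]
    have hsub : (phi δ N ⁻¹' (⋃ a ∈ T1, node δ N n a)) ∩ Ico (0:ℝ) 1 ⊆
        ⋃ a ∈ T2, {y ∈ Ico (0:ℝ) 1 | pre N n y = a} := by
      intro y hy
      obtain ⟨hy1, hy2⟩ := hy
      rw [mem_preimage] at hy1
      simp only [mem_iUnion] at hy1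
      obtain ⟨a₀, ha₀T, ha₀⟩ := hy1
      refine mem_biUnion (Finset.mem_coe.mpr ?_) ⟨hy2, rfl⟩
      rw [hT2, Finset.mem_filter]
      refine ⟨Finset.mem_univ _, ?_⟩
      have hmem := phi_mem_node h0 hNle hN1 y n
      rw [node, mem_Icc] at hmem ha₀
      rw [hT1, Finset.mem_filter] at ha₀T
      have h2 := ha₀T.2
      rw [abs_le] at h2 ⊢
      constructor <;> [linarith [hmem.2, ha₀.1, h2.1]; linarith [hmem.1, ha₀.2, h2.2]]
    calc volume ((phi δ N ⁻¹' (⋃ a ∈ T1, node δ N n a)) ∩ Ico (0:ℝ) 1)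
        ≤ volume (⋃ a ∈ T2, {y ∈ Ico (0:ℝ) 1 | pre N n y = a}) := measure_mono hsub
      _ ≤ ∑ a ∈ T2, volume {y ∈ Ico (0:ℝ) 1 | pre N n y = a} := measure_biUnion_finset_le _ _
      _ ≤ ∑ _a ∈ T2, ENNReal.ofReal (((N:ℝ)⁻¹)^n) :=
          Finset.sum_le_sum (fun a _ => volume_pre_fiber N n a)
      _ = (T2.card : ENNReal) * ENNReal.ofReal (((N:ℝ)⁻¹)^n) := by
          rw [Finset.sum_const, nsmul_eq_mul]
  have hcard : (T2.card : ℝ) ≤ d/rad δ n + 4 := by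
    have := card_sep T2 (cen δ N n) (2*rad δ n) (d + 3*rad δ n) u (by linarith) (by linarith)
      (fun a ha b hb hab => cen_sep h0 hNle hN1 n a b hab)
      (fun a ha => by
        rw [hT2, Finset.mem_filter] at ha
        exact ha.2)
    rw [div_add' _ _ _ hr.ne', le_div_iff₀ hr]
    nlinarith
  calc muC δ N U ≤ muC δ N V := measure_mono hUV
    _ ≤ muC δ N (⋃ a ∈ T1, node δ N n a) + muC δ N ((⋃ a : Fin n → Fin N, node δ N n a)ᶜ) :=
        measure_union_le _ _
    _ = muC δ N (⋃ a ∈ T1, node δ N n a) := by rw [hcompl, add_zero]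
    _ ≤ (T2.card : ENNReal) * ENNReal.ofReal (((N:ℝ)⁻¹)^n) := hmain
    _ ≤ ENNReal.ofReal (d/rad δ n + 4) * ENNReal.ofReal (((N:ℝ)⁻¹)^n) := by
        apply mul_le_mul_left
        rw [← ENNReal.ofReal_natCast]
        exact ENNReal.ofReal_le_ofReal hcard

end M


section Final
variable {δ : ℝ} {N : ℕ} [NeZero N] (h0 : 0 < δ) (hNle : (N:ℝ) ≤ 1/(18*δ)) (hN2 : 2 ≤ N)

include h0 hNle hN2

lemma hN1' : 1 ≤ N := le_trans (by norm_num) hN2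

lemma rpow_base (n : ℕ) :
    ((N:ℝ)⁻¹)^n = ((6*δ)^n : ℝ) ^ (Real.log N / Real.log (1/(6*δ))) := by
  set s := Real.log N / Real.log (1/(6*δ)) with hs
  have h6pos : (0:ℝ) < 6*δ := by linarith
  have h61 : 6*δ < 1 := six_delta_lt_one h0 hNle (hN1' h0 hNle hN2)
  have hlogneg : Real.log (6*δ) < 0 := Real.log_neg h6pos h61
  have hNpos : (0:ℝ) < N := by
    have : (2:ℝ) ≤ N := by exact_mod_cast hN2
    linarith
  have hbase : (6*δ) ^ s = (N:ℝ)⁻¹ := by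
    rw [Real.rpow_def_of_pos h6pos]
    have hloginv : Real.log (1/(6*δ)) = -Real.log (6*δ) := by
      rw [one_div, Real.log_inv]
    have : Real.log (6*δ) * s = -Real.log N := by
      rw [hs, hloginv, mul_div_assoc', div_eq_iff (neg_ne_zero.mpr hlogneg.ne)]
      ring
    rw [this, Real.exp_neg, Real.exp_log hNpos]
  calc ((N:ℝ)⁻¹)^n = ((6*δ) ^ s)^n := by rw [hbase]
    _ = ((6*δ)^n : ℝ) ^ s := by
        have e1 : ((6*δ) ^ s)^n = (6*δ) ^ (s * n) := by
          rw [← Real.rpow_natCast ((6*δ) ^ s) n, ← Real.rpow_mul h6pos.le]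
        have e2 : ((6*δ)^n : ℝ) ^ s = (6*δ) ^ ((n:ℝ) * s) := by
          rw [← Real.rpow_natCast (6*δ) n, ← Real.rpow_mul h6pos.le]
        rw [e1, e2, mul_comm s (n:ℝ)]

lemma s_pos : 0 < Real.log N / Real.log (1/(6*δ)) := by
  have h61 : 6*δ < 1 := six_delta_lt_one h0 hNle (hN1' h0 hNle hN2)
  apply div_pos
  · apply Real.log_pos
    have : (2:ℝ) ≤ N := by exact_mod_cast hN2
    linarith
  · apply Real.log_pos
    rw [lt_div_iff₀ (by linarith : (0:ℝ) < 6*δ)]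
    linarith

lemma frostman (U : Set ℝ) (hdiam : EMetric.diam U ≤ ENNReal.ofReal (rad δ 1)) :
    muC δ N U ≤ ENNReal.ofReal (5*(N:ℝ)*(δ⁻¹) ^ (Real.log N / Real.log (1/(6*δ)))) *
      (EMetric.diam U) ^ (Real.log N / Real.log (1/(6*δ))) := by
  have hN1 := hN1' h0 hNle hN2
  set s := Real.log N / Real.log (1/(6*δ)) with hs
  have hspos := s_pos h0 hNle hN2
  have h61 : 6*δ < 1 := six_delta_lt_one h0 hNle hN1
  rcases U.eq_empty_or_nonempty with rfl | ⟨u, hu⟩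
  · simp
  have hfin : EMetric.diam U ≠ ⊤ := ne_top_of_le_ne_top ENNReal.ofReal_ne_top hdiam
  set d := (EMetric.diam U).toReal with hd
  have hd0 : 0 ≤ d := ENNReal.toReal_nonneg
  have hdiam_eq : EMetric.diam U = ENNReal.ofReal d := (ENNReal.ofReal_toReal hfin).symm
  have hdr1 : d ≤ rad δ 1 := by
    rw [hdiam_eq] at hdiam
    have := (ENNReal.ofReal_le_ofReal_iff (rad_pos h0 1).le).mp hdiam
    exact this
  have hU : U ⊆ Icc (u-d) (u+d) := by
    intro x hx
    have := EMetric.edist_le_diam_of_mem hx hu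
    have hdist : dist x u ≤ d := by
      rw [dist_edist]
      exact ENNReal.toReal_le_toReal (lt_of_le_of_lt (le_trans this hdiam_eq.le)
        ENNReal.ofReal_lt_top).ne hfin |>.mpr this
    rw [Real.dist_eq, abs_le] at hdist
    rw [mem_Icc]
    constructor <;> linarith [hdist.1, hdist.2]
  rcases eq_or_lt_of_le hd0 with hd00 | hdpos
  · -- diameter zero: measure is zero
    have hzero : muC δ N U = 0 := by
      have hb : ∀ n : ℕ, muC δ N U ≤ ENNReal.ofReal 4 * ENNReal.ofReal (((N:ℝ)⁻¹)^n) := by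
        intro n
        have := mass_bound h0 hNle hN1 U u d hd0 hU n
        rw [← hd00] at this
        simpa [zero_div] using this
      have htend : Tendsto (fun n : ℕ => ENNReal.ofReal 4 * ENNReal.ofReal (((N:ℝ)⁻¹)^n))
          atTop (𝓝 0) := by
        have h1 : Tendsto (fun n : ℕ => ((N:ℝ)⁻¹)^n) atTop (𝓝 0) := by
          apply tendsto_pow_atTop_nhds_zero_of_lt_one
          · positivity
          · rw [inv_lt_one_iff₀]
            right
            have : (2:ℝ) ≤ N := by exact_mod_cast hN2
            linarith
        have h2 : Tendsto (fun n : ℕ => ENNReal.ofReal (((N:ℝ)⁻¹)^n)) atTop (𝓝 0) := by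
          have := ENNReal.tendsto_ofReal h1
          simpa using this
        have := ENNReal.Tendsto.const_mul (a := ENNReal.ofReal 4) h2 (by simp)
        simpa using this
      exact le_antisymm (ge_of_tendsto' htend (fun n => hb n) |>.trans (le_refl 0)) zero_le
    rw [hzero]
    exact zero_le
  · -- positive diameter
    have hex : ∃ m : ℕ, rad δ m < d := by
      obtain ⟨m, hm⟩ := exists_pow_lt_of_lt_one (show (0:ℝ) < d/δ by positivity) h61
      exact ⟨m, by rw [rad]; rw [lt_div_iff₀ h0] at hm; nlinarith⟩
    classical
    set m := Nat.find hex with hm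
    have hm_spec : rad δ m < d := Nat.find_spec hex
    have hm1 : 1 ≤ m := by
      by_contra hcon
      have h00 : m = 0 := by omega
      have hsp := hm_spec
      rw [h00] at hsp
      have hr01 : rad δ 1 < rad δ 0 := by
        simp only [rad]
        nlinarith
      linarith
    set n := m - 1 with hn
    have hnm : n + 1 = m := by omega
    have hdn : d ≤ rad δ n := by
      have := Nat.find_min hex (m := n) (by omega)
      linarith [not_lt.mp this]
    have hstep1 := mass_bound h0 hNle hN1 U u d hd0 hU n
    have hratio : d/rad δ n + 4 ≤ 5 := by
      have hr := rad_pos h0 n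
      have : d/rad δ n ≤ 1 := by
        rw [div_le_one hr]
        exact hdn
      linarith
    have hpow : ((N:ℝ)⁻¹)^n ≤ (N:ℝ) * (d * δ⁻¹) ^ s := by
      have hNpos : (0:ℝ) < N := by positivity
      have h1 : ((N:ℝ)⁻¹)^n = (N:ℝ) * ((N:ℝ)⁻¹)^(n+1) := by
        rw [pow_succ]
        field_simp
      rw [h1, rpow_base h0 hNle hN2 (n+1)]
      apply mul_le_mul_of_nonneg_left _ hNpos.le
      apply Real.rpow_le_rpow (by positivity)
      · rw [hnm]
        simp only [rad] at hm_spec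
        rw [show d * δ⁻¹ = d/δ by ring, le_div_iff₀ h0]
        nlinarith
      · exact hspos.le
    calc muC δ N U ≤ ENNReal.ofReal (d/rad δ n + 4) * ENNReal.ofReal (((N:ℝ)⁻¹)^n) := hstep1
      _ ≤ ENNReal.ofReal 5 * ENNReal.ofReal ((N:ℝ) * (d * δ⁻¹) ^ s) := by
          exact mul_le_mul' (ENNReal.ofReal_le_ofReal hratio) (ENNReal.ofReal_le_ofReal hpow)
      _ = ENNReal.ofReal (5*(N:ℝ)*(δ⁻¹) ^ s) * ENNReal.ofReal (d ^ s) := by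
          rw [← ENNReal.ofReal_mul (by norm_num), ← ENNReal.ofReal_mul (by positivity)]
          congr 1
          rw [Real.mul_rpow hd0 (by positivity)]
          ring
      _ = ENNReal.ofReal (5*(N:ℝ)*(δ⁻¹) ^ s) * (EMetric.diam U) ^ s := by
          rw [hdiam_eq, ← ENNReal.ofReal_rpow_of_pos hdpos]

end Final

section Final2
variable {δ : ℝ} {N : ℕ} [NeZero N] (h0 : 0 < δ) (h36 : δ ≤ 1/36)
  (hNle : (N:ℝ) ≤ 1/(18*δ)) (hN2 : 2 ≤ N)

include h0 hNle hN2 in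
lemma dimH_kantor_ge :
    ENNReal.ofReal (Real.log N / Real.log (1/(6*δ))) ≤ dimH (kantorSet δ N) := by
  have hN1 : 1 ≤ N := by omega
  set s := Real.log N / Real.log (1/(6*δ)) with hs
  have hspos := s_pos h0 hNle hN2
  set Creal := 5*(N:ℝ)*(δ⁻¹) ^ s with hCreal
  have hCpos : 0 < Creal := by
    have h1 : (0:ℝ) < (N:ℝ) := by positivity
    have h2 : (0:ℝ) < (δ⁻¹) ^ s := Real.rpow_pos_of_pos (by positivity) s
    positivity
  set C := ENNReal.ofReal Creal with hC
  have hC0 : C ≠ 0 := (ENNReal.ofReal_pos.mpr hCpos).ne'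
  have hCt : C ≠ ⊤ := ENNReal.ofReal_ne_top
  have hle : C⁻¹ • muC δ N ≤ MeasureTheory.Measure.hausdorffMeasure (X := ℝ) s := by
    apply MeasureTheory.Measure.le_hausdorffMeasure s _ (ENNReal.ofReal (rad δ 1))
      (ENNReal.ofReal_pos.mpr (rad_pos h0 1))
    intro U hU
    rw [Measure.smul_apply, smul_eq_mul]
    calc C⁻¹ * muC δ N U ≤ C⁻¹ * (C * (EMetric.diam U) ^ s) := by
          apply mul_le_mul_right
          exact frostman h0 hNle hN2 U hU
      _ = (EMetric.diam U) ^ s := by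
          rw [← mul_assoc, ENNReal.inv_mul_cancel hC0 hCt, one_mul]
  have hkm : MeasurableSet (kantorSet δ N) := by
    apply IsClosed.measurableSet
    apply isClosed_iInter
    intro n
    exact isClosed_iUnion_of_finite (fun a => isClosed_Icc)
  have hmass : muC δ N (kantorSet δ N) = 1 := by
    rw [muC, Measure.map_apply (phi_measurable h0 hNle hN1) hkm,
      Measure.restrict_apply ((phi_measurable h0 hNle hN1) hkm)]
    have : phi δ N ⁻¹' kantorSet δ N = univ := by
      ext y
      simp only [mem_preimage, mem_univ, iff_true, kantorSet, mem_iInter]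
      intro n
      exact mem_iUnion.mpr ⟨pre N n y, phi_mem_node h0 hNle hN1 y n⟩
    rw [this, univ_inter, Real.volume_Ico]
    norm_num
  have hne : MeasureTheory.Measure.hausdorffMeasure (X := ℝ) s (kantorSet δ N) ≠ 0 := by
    intro hzero
    have h1 : (C⁻¹ • muC δ N) (kantorSet δ N) ≤ 0 := by
      rw [← hzero]
      exact Measure.le_iff'.mp hle (kantorSet δ N)
    rw [Measure.smul_apply, smul_eq_mul, hmass, mul_one] at h1
    exact (ENNReal.inv_ne_zero.mpr hCt) (le_antisymm h1 zero_le)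
  have hcoe : ((Real.toNNReal s : NNReal) : ℝ) = s := Real.coe_toNNReal _ hspos.le
  have hne' : MeasureTheory.Measure.hausdorffMeasure (X := ℝ)
      ((Real.toNNReal s : NNReal) : ℝ) (kantorSet δ N) ≠ 0 := by rwa [hcoe]
  have hdim := le_dimH_of_hausdorffMeasure_ne_zero hne'
  exact le_trans (le_of_eq (rfl : ENNReal.ofReal s = ((Real.toNNReal s : NNReal) : ENNReal))) hdim

end Final2

end BadDeltaProof

open BadDeltaProof

theorem badDelta_dimH_lower_bound (δ : ℝ) (h0 : 0 < δ) (h1 : δ < 1 / 18) :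
    ENNReal.ofReal
      (Real.log (⌊1 / (18 * δ)⌋₊ : ℝ) / Real.log (1 / (6 * δ)))
      ≤ dimH (badDelta δ) := by
  by_cases h36 : δ ≤ 1/36
  · set N := ⌊1/(18*δ)⌋₊ with hN
    have h18pos : (0:ℝ) < 18*δ := by linarith
    have hNle : (N:ℝ) ≤ 1/(18*δ) := Nat.floor_le (by positivity)
    have hN2 : 2 ≤ N := by
      apply Nat.le_floor
      rw [le_div_iff₀ h18pos]
      push_cast
      linarith
    haveI : NeZero N := ⟨by omega⟩
    exact le_trans (dimH_kantor_ge h0 hNle hN2)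
      (dimH_mono (kantor_subset_bad h0 h36 hNle))
  · push_neg at h36
    have hfloor : ⌊1/(18*δ)⌋₊ = 1 := by
      rw [Nat.floor_eq_iff (by positivity)]
      constructor
      · rw [Nat.cast_one, le_div_iff₀ (by linarith : (0:ℝ) < 18*δ)]
        linarith
      · rw [Nat.cast_one, div_lt_iff₀ (by linarith : (0:ℝ) < 18*δ)]
        linarith
    rw [hfloor]
    simp
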